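/- Consider the controlled Cucker–Smale system v̇_i = (1/N)·Σ_j a(‖x_j − x_i‖)(v_j − v_i) + u_i with the feedback control u_i(t) = −α·(v_i(t) − v̄), where α > 0 and v̄ is the (constant) mean velocity. Then: (i) the velocity variance satisfies V(t) ≤ V(0)·e^{−2αt} for all t ≥ 0; (ii) the spatial variance satisfies √(X(t)) ≤ √(X(0)) + √(V(0))/α for all t ≥ 0, so the solution converges to flocking; and (iii) if α·N·√(V(0)) ≤ M, then the control satisfies the bound Σ_{i=1}^N ‖u_i(t)‖ ≤ M for all t ≥ 0. -/

import Mathlib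

open Filter
local notation "⟪" x ", " y "⟫_ℝ" => @inner ℝ _ _ x y

section auxCS

variable {E : Type*} [NormedAddCommGroup E] [InnerProductSpace ℝ E] {N : ℕ}

private lemma cs_sumB (a : ℝ → ℝ) (y w : Fin N → E) :
    ∑ i, ∑ k, a ‖y k - y i‖ • (w k - w i) = 0 := by
  have h : (∑ i, ∑ k, a ‖y k - y i‖ • (w k - w i))
      = ∑ i, ∑ k, -(a ‖y k - y i‖ • (w k - w i)) := by
    rw [Finset.sum_comm]
    refine Finset.sum_congr rfl fun i _ => Finset.sum_congr rfl fun k _ => ?_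
    rw [norm_sub_rev (y i) (y k), ← smul_neg, neg_sub]
  have h' : (∑ i, ∑ k, a ‖y k - y i‖ • (w k - w i))
      = -(∑ i, ∑ k, a ‖y k - y i‖ • (w k - w i)) := by
    nth_rewrite 1 [h]
    simp
  have h2 : (2:ℝ) • (∑ i, ∑ k, a ‖y k - y i‖ • (w k - w i)) = 0 := by
    rw [two_smul]
    nth_rewrite 1 [h']
    simp
  rcases smul_eq_zero.mp h2 with h3 | h3
  · norm_num at h3
  · exact h3

private lemma cs_pair (a : ℝ → ℝ) (ha : ∀ s, 0 ≤ s → 0 < a s) (y w : Fin N → E) :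
    ∑ i, ∑ k, a ‖y k - y i‖ * ⟪w i, w k - w i⟫_ℝ ≤ 0 := by
  have key : (2:ℝ) * ∑ i, ∑ k, a ‖y k - y i‖ * ⟪w i, w k - w i⟫_ℝ
      = ∑ i, ∑ k, -(a ‖y k - y i‖ * ‖w k - w i‖ ^ 2) := by
    rw [two_mul]
    nth_rewrite 1 [Finset.sum_comm]
    rw [← Finset.sum_add_distrib]
    refine Finset.sum_congr rfl fun i _ => ?_
    rw [← Finset.sum_add_distrib]
    refine Finset.sum_congr rfl fun k _ => ?_
    rw [norm_sub_rev (y i), ← real_inner_self_eq_norm_sq]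
    simp only [inner_sub_left, inner_sub_right]
    rw [real_inner_comm (w k) (w i)]
    ring
  have hnp : ∑ i, ∑ k, -(a ‖y k - y i‖ * ‖w k - w i‖ ^ 2) ≤ 0 :=
    Finset.sum_nonpos fun i _ => Finset.sum_nonpos fun k _ =>
      neg_nonpos.mpr (mul_nonneg (le_of_lt (ha _ (norm_nonneg _))) (sq_nonneg _))
  linarith

private lemma cs_T_nonpos (a : ℝ → ℝ) (ha : ∀ s, 0 ≤ s → 0 < a s) (y w : Fin N → E)
    (B : Fin N → E) (hB : ∀ i, B i = ∑ k, a ‖y k - y i‖ • (w k - w i)) :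
    ∑ i, ∑ j, ⟪w i - w j, B i - B j⟫_ℝ ≤ 0 := by
  have hBsum : ∑ i, B i = 0 := by
    rw [Finset.sum_congr rfl fun i _ => hB i]
    exact cs_sumB a y w
  have hib : ∑ i, ⟪w i, B i⟫_ℝ ≤ 0 := by
    have he : ∀ i, ⟪w i, B i⟫_ℝ = ∑ k, a ‖y k - y i‖ * ⟪w i, w k - w i⟫_ℝ := by
      intro i
      rw [hB i, inner_sum]
      exact Finset.sum_congr rfl fun k _ => real_inner_smul_right _ _ _
    calc ∑ i, ⟪w i, B i⟫_ℝ = ∑ i, ∑ k, a ‖y k - y i‖ * ⟪w i, w k - w i⟫_ℝ :=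
          Finset.sum_congr rfl fun i _ => he i
      _ ≤ 0 := cs_pair a ha y w
  have expand : ∑ i, ∑ j, ⟪w i - w j, B i - B j⟫_ℝ = 2 * (N:ℝ) * ∑ i, ⟪w i, B i⟫_ℝ := by
    calc ∑ i, ∑ j, ⟪w i - w j, B i - B j⟫_ℝ
        = ∑ i, ∑ j, (⟪w i, B i⟫_ℝ - ⟪w i, B j⟫_ℝ - ⟪w j, B i⟫_ℝ + ⟪w j, B j⟫_ℝ) := by
          refine Finset.sum_congr rfl fun i _ => Finset.sum_congr rfl fun j _ => ?_
          simp only [inner_sub_left, inner_sub_right]; ring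
      _ = ∑ i, ((N:ℝ) * ⟪w i, B i⟫_ℝ - ⟪w i, ∑ j, B j⟫_ℝ - ⟪∑ j, w j, B i⟫_ℝ
            + ∑ j, ⟪w j, B j⟫_ℝ) := by
          refine Finset.sum_congr rfl fun i _ => ?_
          rw [Finset.sum_add_distrib, Finset.sum_sub_distrib, Finset.sum_sub_distrib,
              Finset.sum_const, Finset.card_univ, Fintype.card_fin, ← inner_sum, ← sum_inner,
              nsmul_eq_mul]
      _ = 2 * (N:ℝ) * ∑ i, ⟪w i, B i⟫_ℝ := by
          rw [hBsum]
          simp only [inner_zero_right, sub_zero]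
          rw [Finset.sum_add_distrib, Finset.sum_sub_distrib, ← Finset.mul_sum,
              ← inner_sum, hBsum, inner_zero_right, Finset.sum_const, Finset.card_univ,
              Fintype.card_fin, nsmul_eq_mul]
          ring
  rw [expand]
  have h2N : (0:ℝ) ≤ 2 * N := by positivity
  nlinarith [hib, h2N]

private lemma cs_dissip (α : ℝ) (a : ℝ → ℝ)
    (ha : ∀ s, 0 ≤ s → 0 < a s) (y w : Fin N → E) (m : E) :
    ∑ i, ∑ j, 2 * ⟪w i - w j,
        ((N:ℝ)⁻¹ • ∑ k, a ‖y k - y i‖ • (w k - w i) + -α • (w i - m)) -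
        ((N:ℝ)⁻¹ • ∑ k, a ‖y k - y j‖ • (w k - w j) + -α • (w j - m))⟫_ℝ
      ≤ -(2 * α) * ∑ i, ∑ j, ‖w i - w j‖ ^ 2 := by
  set B : Fin N → E := fun i => ∑ k, a ‖y k - y i‖ • (w k - w i) with hB
  have hBe : ∀ i, B i = ∑ k, a ‖y k - y i‖ • (w k - w i) := fun i => by rw [hB]
  have hT := cs_T_nonpos a ha y w B hBe
  have hpt : ∀ i j, (2:ℝ) * ⟪w i - w j,
        ((N:ℝ)⁻¹ • B i + -α • (w i - m)) - ((N:ℝ)⁻¹ • B j + -α • (w j - m))⟫_ℝ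
      = 2 * (N:ℝ)⁻¹ * ⟪w i - w j, B i - B j⟫_ℝ + -(2 * α) * ‖w i - w j‖ ^ 2 := by
    intro i j
    have hd : ((N:ℝ)⁻¹ • B i + -α • (w i - m)) - ((N:ℝ)⁻¹ • B j + -α • (w j - m))
        = (N:ℝ)⁻¹ • (B i - B j) + (-α) • (w i - w j) := by
      module
    rw [hd, inner_add_right, real_inner_smul_right, real_inner_smul_right,
        real_inner_self_eq_norm_sq]
    ring
  calc ∑ i, ∑ j, 2 * ⟪w i - w j,
        ((N:ℝ)⁻¹ • B i + -α • (w i - m)) - ((N:ℝ)⁻¹ • B j + -α • (w j - m))⟫_ℝ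
      = ∑ i, ∑ j, (2 * (N:ℝ)⁻¹ * ⟪w i - w j, B i - B j⟫_ℝ
          + -(2 * α) * ‖w i - w j‖ ^ 2) := by
        exact Finset.sum_congr rfl fun i _ => Finset.sum_congr rfl fun j _ => hpt i j
    _ = 2 * (N:ℝ)⁻¹ * (∑ i, ∑ j, ⟪w i - w j, B i - B j⟫_ℝ)
          + -(2 * α) * ∑ i, ∑ j, ‖w i - w j‖ ^ 2 := by
        simp only [Finset.sum_add_distrib, Finset.mul_sum]
    _ ≤ -(2 * α) * ∑ i, ∑ j, ‖w i - w j‖ ^ 2 := by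
        have h1 : 2 * (N:ℝ)⁻¹ * (∑ i, ∑ j, ⟪w i - w j, B i - B j⟫_ℝ) ≤ 0 := by
          have h2 : (0:ℝ) ≤ 2 * (N:ℝ)⁻¹ := by positivity
          nlinarith [hT, h2]
        linarith

private lemma cs_cauchy (p q : Fin N → Fin N → E) :
    ∑ i, ∑ j, ⟪p i j, q i j⟫_ℝ
      ≤ Real.sqrt (∑ i, ∑ j, ‖p i j‖ ^ 2) * Real.sqrt (∑ i, ∑ j, ‖q i j‖ ^ 2) := by
  have h1 : ∑ i, ∑ j, ⟪p i j, q i j⟫_ℝ ≤ ∑ i, ∑ j, ‖p i j‖ * ‖q i j‖ :=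
    Finset.sum_le_sum fun i _ => Finset.sum_le_sum fun j _ => real_inner_le_norm _ _
  have h2 : (∑ i, ∑ j, ‖p i j‖ * ‖q i j‖) ^ 2
      ≤ (∑ i, ∑ j, ‖p i j‖ ^ 2) * (∑ i, ∑ j, ‖q i j‖ ^ 2) := by
    have h := Finset.sum_mul_sq_le_sq_mul_sq Finset.univ
      (fun ij : Fin N × Fin N => ‖p ij.1 ij.2‖) (fun ij : Fin N × Fin N => ‖q ij.1 ij.2‖)
    simpa [Fintype.sum_prod_type] using h
  have hnn : 0 ≤ ∑ i, ∑ j, ‖p i j‖ * ‖q i j‖ :=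
    Finset.sum_nonneg fun i _ => Finset.sum_nonneg fun j _ =>
      mul_nonneg (norm_nonneg _) (norm_nonneg _)
  have h3 : ∑ i, ∑ j, ‖p i j‖ * ‖q i j‖
      ≤ Real.sqrt (∑ i, ∑ j, ‖p i j‖ ^ 2) * Real.sqrt (∑ i, ∑ j, ‖q i j‖ ^ 2) := by
    have h4 := Real.sqrt_le_sqrt h2
    rw [Real.sqrt_sq hnn, Real.sqrt_mul (by positivity)] at h4
    exact h4
  linarith

end auxCS

set_option maxHeartbeats 2000000 in
/-- For the controlled Cucker–Smale system with feedback control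
`u_i(t) = −α·(v_i(t) − v̄)` (`α > 0`, `v̄` the invariant mean velocity):
(i) `V(t) ≤ V(0)·e^{−2αt}` for `t ≥ 0`; (ii) `√(X t) ≤ √(X 0) + √(V 0)/α` for `t ≥ 0`,
so the solution converges to flocking; (iii) if `α·N·√(V 0) ≤ M` then
`Σ_i ‖u_i(t)‖ ≤ M` for all `t ≥ 0`. -/
theorem controlled_cucker_smale_linear_feedback
    {d N : ℕ} (hN : 0 < N) (α M : ℝ) (hα : 0 < α)
    (a : ℝ → ℝ)
    (ha_pos : ∀ s, 0 ≤ s → 0 < a s)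
    (ha_anti : AntitoneOn a (Set.Ici 0))
    (ha_smooth : ContDiffOn ℝ 1 a (Set.Ici 0))
    (x v : ℝ → Fin N → EuclideanSpace ℝ (Fin d))
    (u : ℝ → Fin N → EuclideanSpace ℝ (Fin d))
    (hu : ∀ t i, u t i = -α • (v t i - (N : ℝ)⁻¹ • ∑ k, v t k))
    (hx : ∀ i t, HasDerivAt (fun s => x s i) (v t i) t)
    (hv : ∀ i t, HasDerivAt (fun s => v s i)
      ((N : ℝ)⁻¹ • ∑ j, a ‖x t j - x t i‖ • (v t j - v t i) + u t i) t)
    (X V : ℝ → ℝ)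
    (hX : ∀ t, X t = (1 / (2 * (N : ℝ) ^ 2)) * ∑ i, ∑ j, ‖x t i - x t j‖ ^ 2)
    (hV : ∀ t, V t = (1 / (2 * (N : ℝ) ^ 2)) * ∑ i, ∑ j, ‖v t i - v t j‖ ^ 2) :
    (∀ t ≥ (0 : ℝ), V t ≤ V 0 * Real.exp (-2 * α * t)) ∧
    (∀ t ≥ (0 : ℝ), Real.sqrt (X t) ≤ Real.sqrt (X 0) + Real.sqrt (V 0) / α) ∧
    Tendsto V atTop (nhds 0) ∧
    (α * N * Real.sqrt (V 0) ≤ M → ∀ t ≥ (0 : ℝ), ∑ i, ‖u t i‖ ≤ M) := by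
  have hNR : (0:ℝ) < N := by exact_mod_cast hN
  have hNne : (N:ℝ) ≠ 0 := ne_of_gt hNR
  set c : ℝ := 1 / (2 * (N : ℝ) ^ 2) with hc
  have hcpos : 0 < c := by rw [hc]; positivity
  set D : ℝ → Fin N → EuclideanSpace ℝ (Fin d) :=
    fun t i => (N : ℝ)⁻¹ • ∑ j, a ‖x t j - x t i‖ • (v t j - v t i) + u t i with hD
  have hvD : ∀ i t, HasDerivAt (fun s => v s i) (D t i) t := by
    intro i t; simp only [hD]; exact hv i t
  have hVnn : ∀ t, 0 ≤ V t := by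
    intro t; rw [hV t]; positivity
  have hXnn : ∀ t, 0 ≤ X t := by
    intro t; rw [hX t]; positivity
  -- derivative of ‖v i - v j‖²
  have hsqv : ∀ t i j, HasDerivAt (fun s => ‖v s i - v s j‖ ^ 2)
      (2 * ⟪v t i - v t j, D t i - D t j⟫_ℝ) t := by
    intro t i j
    have hf : HasDerivAt (fun s => v s i - v s j) (D t i - D t j) t := (hvD i t).sub (hvD j t)
    have h2 := HasDerivAt.inner (𝕜 := ℝ) hf hf
    simp only [real_inner_self_eq_norm_sq] at h2
    refine h2.congr_deriv ?_
    rw [real_inner_comm (D t i - D t j) (v t i - v t j)]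
    ring
  have hVd : ∀ t, HasDerivAt V (c * ∑ i, ∑ j, 2 * ⟪v t i - v t j, D t i - D t j⟫_ℝ) t := by
    intro t
    have hVfun : V = fun t => c * ∑ i, ∑ j, ‖v t i - v t j‖ ^ 2 := funext fun t => hV t
    rw [hVfun]
    exact (HasDerivAt.fun_sum fun i _ => HasDerivAt.fun_sum fun j _ => hsqv t i j).const_mul c
  -- dissipation inequality
  have hVle : ∀ t, c * ∑ i, ∑ j, 2 * ⟪v t i - v t j, D t i - D t j⟫_ℝ ≤ -(2 * α) * V t := by
    intro t
    have key := cs_dissip α a ha_pos (x t) (v t) ((N : ℝ)⁻¹ • ∑ k, v t k)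
    have hDe : ∀ i, D t i = (N : ℝ)⁻¹ • ∑ k, a ‖x t k - x t i‖ • (v t k - v t i)
        + -α • (v t i - (N : ℝ)⁻¹ • ∑ k, v t k) := by
      intro i; simp only [hD]; rw [hu t i]
    have key' : ∑ i, ∑ j, 2 * ⟪v t i - v t j, D t i - D t j⟫_ℝ
        ≤ -(2 * α) * ∑ i, ∑ j, ‖v t i - v t j‖ ^ 2 := by
      calc ∑ i, ∑ j, 2 * ⟪v t i - v t j, D t i - D t j⟫_ℝ
          = ∑ i, ∑ j, 2 * ⟪v t i - v t j,
              ((N:ℝ)⁻¹ • ∑ k, a ‖x t k - x t i‖ • (v t k - v t i)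
                + -α • (v t i - (N : ℝ)⁻¹ • ∑ k, v t k)) -
              ((N:ℝ)⁻¹ • ∑ k, a ‖x t k - x t j‖ • (v t k - v t j)
                + -α • (v t j - (N : ℝ)⁻¹ • ∑ k, v t k))⟫_ℝ := by
            refine Finset.sum_congr rfl fun i _ => Finset.sum_congr rfl fun j _ => ?_
            rw [hDe i, hDe j]
        _ ≤ -(2 * α) * ∑ i, ∑ j, ‖v t i - v t j‖ ^ 2 := key
    rw [hV t]
    calc c * ∑ i, ∑ j, 2 * ⟪v t i - v t j, D t i - D t j⟫_ℝ
        ≤ c * (-(2 * α) * ∑ i, ∑ j, ‖v t i - v t j‖ ^ 2) :=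
          mul_le_mul_of_nonneg_left key' hcpos.le
      _ = -(2 * α) * (c * ∑ i, ∑ j, ‖v t i - v t j‖ ^ 2) := by ring
  -- Gronwall for V
  have hVexp : ∀ t ≥ (0:ℝ), V t ≤ V 0 * Real.exp (-2 * α * t) := by
    set g : ℝ → ℝ := fun t => V t * Real.exp (2 * α * t) with hg
    have hgd : ∀ t, HasDerivAt g
        ((c * ∑ i, ∑ j, 2 * ⟪v t i - v t j, D t i - D t j⟫_ℝ) * Real.exp (2 * α * t)
          + V t * (Real.exp (2 * α * t) * (2 * α))) t := by
      intro t
      have h1 : HasDerivAt (fun s : ℝ => Real.exp (2 * α * s))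
          (Real.exp (2 * α * t) * (2 * α)) t := by
        simpa using ((hasDerivAt_id t).const_mul (2 * α)).exp
      exact (hVd t).mul h1
    have hgderiv : ∀ t, deriv g t ≤ 0 := by
      intro t
      rw [(hgd t).deriv]
      have h1 := hVle t
      have h2 : (0:ℝ) < Real.exp (2 * α * t) := Real.exp_pos _
      have h3 : ((c * ∑ i, ∑ j, 2 * ⟪v t i - v t j, D t i - D t j⟫_ℝ) + 2 * α * V t)
          * Real.exp (2 * α * t) ≤ 0 :=
        mul_nonpos_iff.mpr (Or.inr ⟨by linarith, h2.le⟩)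
      nlinarith [h3]
    have hganti : AntitoneOn g (Set.Ici 0) :=
      antitoneOn_of_deriv_nonpos (convex_Ici 0)
        (fun t _ => ((hgd t).differentiableAt.continuousAt).continuousWithinAt)
        (fun t _ => ((hgd t).differentiableAt).differentiableWithinAt)
        (fun t _ => hgderiv t)
    intro t ht
    have h5 : g t ≤ g 0 := hganti Set.self_mem_Ici ht ht
    have h6 : g 0 = V 0 := by simp [hg]
    have h7 : V t * Real.exp (2 * α * t) ≤ V 0 := by rw [← h6]; exact h5
    have hepos : (0:ℝ) < Real.exp (2 * α * t) := Real.exp_pos _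
    have h8 : V t ≤ V 0 * Real.exp (-(2 * α * t)) := by
      rw [Real.exp_neg, ← div_eq_mul_inv, le_div_iff₀ hepos]
      exact h7
    calc V t ≤ V 0 * Real.exp (-(2 * α * t)) := h8
      _ = V 0 * Real.exp (-2 * α * t) := by ring_nf
  -- part (iii) : tendsto
  have htend : Tendsto V atTop (nhds 0) := by
    have hg : Tendsto (fun t : ℝ => V 0 * Real.exp (-2 * α * t)) atTop (nhds 0) := by
      have h1 : Tendsto (fun t : ℝ => -2 * α * t) atTop atBot := by
        have := (tendsto_const_mul_atBot_of_neg (show -2 * α < 0 by linarith)).mpr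
          (tendsto_id (α := ℝ))
        simpa using this
      have h2 := Real.tendsto_exp_atBot.comp h1
      have h3 := h2.const_mul (V 0)
      simpa using h3
    apply squeeze_zero' (Eventually.of_forall hVnn) ?_ hg
    filter_upwards [eventually_ge_atTop (0:ℝ)] with t ht using hVexp t ht
  -- sqrt(V) decay
  have hVsqrt : ∀ t ≥ (0:ℝ), Real.sqrt (V t) ≤ Real.sqrt (V 0) * Real.exp (-(α * t)) := by
    intro t ht
    have h1 : V t ≤ V 0 * Real.exp (-2 * α * t) := hVexp t ht
    have h2 : Real.sqrt (V t) ≤ Real.sqrt (V 0 * Real.exp (-2 * α * t)) := Real.sqrt_le_sqrt h1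
    rw [Real.sqrt_mul (hVnn 0)] at h2
    have h3 : Real.sqrt (Real.exp (-2 * α * t)) = Real.exp (-(α * t)) := by
      rw [show (-2 * α * t) = (-(α * t)) + (-(α * t)) by ring, Real.exp_add]
      exact Real.sqrt_mul_self (Real.exp_pos _).le
    rwa [h3] at h2
  -- derivative of X
  have hsqx : ∀ t i j, HasDerivAt (fun s => ‖x s i - x s j‖ ^ 2)
      (2 * ⟪x t i - x t j, v t i - v t j⟫_ℝ) t := by
    intro t i j
    have hf : HasDerivAt (fun s => x s i - x s j) (v t i - v t j) t := (hx i t).sub (hx j t)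
    have h2 := HasDerivAt.inner (𝕜 := ℝ) hf hf
    simp only [real_inner_self_eq_norm_sq] at h2
    refine h2.congr_deriv ?_
    rw [real_inner_comm (v t i - v t j) (x t i - x t j)]
    ring
  have hXd : ∀ t, HasDerivAt X (c * ∑ i, ∑ j, 2 * ⟪x t i - x t j, v t i - v t j⟫_ℝ) t := by
    intro t
    have hXfun : X = fun t => c * ∑ i, ∑ j, ‖x t i - x t j‖ ^ 2 := funext fun t => hX t
    rw [hXfun]
    exact (HasDerivAt.fun_sum fun i _ => HasDerivAt.fun_sum fun j _ => hsqx t i j).const_mul c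
  have hX'le : ∀ t, c * ∑ i, ∑ j, 2 * ⟪x t i - x t j, v t i - v t j⟫_ℝ
      ≤ 2 * Real.sqrt (X t) * Real.sqrt (V t) := by
    intro t
    have hcs := cs_cauchy (fun i j => x t i - x t j) (fun i j => v t i - v t j)
    have e1 : Real.sqrt (X t)
        = Real.sqrt c * Real.sqrt (∑ i, ∑ j, ‖x t i - x t j‖ ^ 2) := by
      rw [hX t, Real.sqrt_mul hcpos.le]
    have e2 : Real.sqrt (V t)
        = Real.sqrt c * Real.sqrt (∑ i, ∑ j, ‖v t i - v t j‖ ^ 2) := by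
      rw [hV t, Real.sqrt_mul hcpos.le]
    have e3 : ∑ i, ∑ j, 2 * ⟪x t i - x t j, v t i - v t j⟫_ℝ
        = 2 * ∑ i, ∑ j, ⟪x t i - x t j, v t i - v t j⟫_ℝ := by
      simp_rw [← Finset.mul_sum]
    calc c * ∑ i, ∑ j, 2 * ⟪x t i - x t j, v t i - v t j⟫_ℝ
        = 2 * c * ∑ i, ∑ j, ⟪x t i - x t j, v t i - v t j⟫_ℝ := by rw [e3]; ring
      _ ≤ 2 * c * (Real.sqrt (∑ i, ∑ j, ‖x t i - x t j‖ ^ 2)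
            * Real.sqrt (∑ i, ∑ j, ‖v t i - v t j‖ ^ 2)) :=
          mul_le_mul_of_nonneg_left hcs (by positivity)
      _ = 2 * Real.sqrt (X t) * Real.sqrt (V t) := by
          have hcc : Real.sqrt c * Real.sqrt c = c := Real.mul_self_sqrt hcpos.le
          rw [e1, e2]
          linear_combination (-(2 * Real.sqrt (∑ i, ∑ j, ‖x t i - x t j‖ ^ 2) *
            Real.sqrt (∑ i, ∑ j, ‖v t i - v t j‖ ^ 2))) * hcc
  -- part (ii)
  have hii : ∀ t ≥ (0:ℝ), Real.sqrt (X t) ≤ Real.sqrt (X 0) + Real.sqrt (V 0) / α := by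
    have hbound : ∀ ε > (0:ℝ), ∀ t ≥ (0:ℝ),
        Real.sqrt (X t) ≤ Real.sqrt (X 0 + ε ^ 2) + Real.sqrt (V 0) / α := by
      intro ε hε
      set f : ℝ → ℝ :=
        fun t => Real.sqrt (X t + ε ^ 2) + (Real.sqrt (V 0) / α) * Real.exp (-(α * t)) with hf
      have hXe : ∀ t, X t + ε ^ 2 ≠ 0 := fun t => by
        have : (0:ℝ) < X t + ε ^ 2 := by have := hXnn t; positivity
        exact this.ne'
      have hfd : ∀ t, HasDerivAt f
          ((c * ∑ i, ∑ j, 2 * ⟪x t i - x t j, v t i - v t j⟫_ℝ)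
              / (2 * Real.sqrt (X t + ε ^ 2))
            + (Real.sqrt (V 0) / α) * (Real.exp (-(α * t)) * (-α))) t := by
        intro t
        have h1 : HasDerivAt (fun s => X s + ε ^ 2)
            (c * ∑ i, ∑ j, 2 * ⟪x t i - x t j, v t i - v t j⟫_ℝ) t := (hXd t).add_const _
        have h2 := h1.sqrt (hXe t)
        have h3 : HasDerivAt (fun s : ℝ => Real.exp (-(α * s)))
            (Real.exp (-(α * t)) * (-α)) t := by
          simpa using ((hasDerivAt_id t).const_mul (-α)).exp
        exact h2.add (h3.const_mul _)
      have hfderiv : ∀ t ∈ Set.Ioi (0:ℝ), deriv f t ≤ 0 := by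
        intro t ht
        rw [(hfd t).deriv]
        have hXV := hX'le t
        have hsqpos : (0:ℝ) < Real.sqrt (X t + ε ^ 2) :=
          Real.sqrt_pos.mpr (by have := hXnn t; positivity)
        have hstep1 : (c * ∑ i, ∑ j, 2 * ⟪x t i - x t j, v t i - v t j⟫_ℝ)
            / (2 * Real.sqrt (X t + ε ^ 2)) ≤ Real.sqrt (V t) := by
          rw [div_le_iff₀ (by positivity)]
          have h5 : Real.sqrt (X t) ≤ Real.sqrt (X t + ε ^ 2) :=
            Real.sqrt_le_sqrt (by nlinarith [sq_nonneg ε])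
          have h6 : (0:ℝ) ≤ Real.sqrt (V t) := Real.sqrt_nonneg _
          nlinarith [hXV, mul_le_mul_of_nonneg_right h5 h6]
        have hstep2 : Real.sqrt (V t) ≤ Real.sqrt (V 0) * Real.exp (-(α * t)) :=
          hVsqrt t (le_of_lt ht)
        have hcalc : (Real.sqrt (V 0) / α) * (Real.exp (-(α * t)) * (-α))
            = -(Real.sqrt (V 0) * Real.exp (-(α * t))) := by
          field_simp
        rw [hcalc]
        linarith
      have hfanti : AntitoneOn f (Set.Ici 0) :=
        antitoneOn_of_deriv_nonpos (convex_Ici 0)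
          (fun t _ => ((hfd t).differentiableAt.continuousAt).continuousWithinAt)
          (fun t ht => ((hfd t).differentiableAt).differentiableWithinAt)
          (fun t ht => hfderiv t (by rwa [interior_Ici] at ht))
      intro t ht
      have h7 : f t ≤ f 0 := hfanti Set.self_mem_Ici ht ht
      have h8 : f 0 = Real.sqrt (X 0 + ε ^ 2) + Real.sqrt (V 0) / α := by
        simp [hf]
      have h9 : Real.sqrt (X t) ≤ Real.sqrt (X t + ε ^ 2) :=
        Real.sqrt_le_sqrt (by nlinarith [sq_nonneg ε])
      have h10 : (0:ℝ) ≤ (Real.sqrt (V 0) / α) * Real.exp (-(α * t)) := by positivity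
      have h11 : Real.sqrt (X t + ε ^ 2) ≤ f t := by
        rw [hf]; simp only []; linarith
      calc Real.sqrt (X t) ≤ Real.sqrt (X t + ε ^ 2) := h9
        _ ≤ f t := h11
        _ ≤ f 0 := h7
        _ = Real.sqrt (X 0 + ε ^ 2) + Real.sqrt (V 0) / α := h8
    intro t ht
    have hlim : Tendsto (fun ε : ℝ => Real.sqrt (X 0 + ε ^ 2) + Real.sqrt (V 0) / α)
        (nhdsWithin 0 (Set.Ioi 0)) (nhds (Real.sqrt (X 0) + Real.sqrt (V 0) / α)) := by
      apply Tendsto.mono_left ?_ nhdsWithin_le_nhds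
      have hcont : Continuous fun ε : ℝ => Real.sqrt (X 0 + ε ^ 2) + Real.sqrt (V 0) / α :=
        ((Real.continuous_sqrt.comp (continuous_const.add (continuous_pow 2))).add
          continuous_const)
      have h := hcont.tendsto 0
      simpa using h
    refine ge_of_tendsto hlim ?_
    filter_upwards [self_mem_nhdsWithin] with ε hε
    exact hbound ε hε t ht
  -- part (iv) : control bound
  have hiv : α * N * Real.sqrt (V 0) ≤ M → ∀ t ≥ (0:ℝ), ∑ i, ‖u t i‖ ≤ M := by
    intro hM t ht
    set m : EuclideanSpace ℝ (Fin d) := (N : ℝ)⁻¹ • ∑ k, v t k with hm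
    set w : Fin N → EuclideanSpace ℝ (Fin d) := fun i => v t i - m with hw
    have hwsum : ∑ i, w i = 0 := by
      simp only [hw]
      rw [Finset.sum_sub_distrib, Finset.sum_const, Finset.card_univ, Fintype.card_fin,
          ← Nat.cast_smul_eq_nsmul ℝ, hm, smul_smul, mul_inv_cancel₀ hNne, one_smul, sub_self]
    have h0 : ∀ i, ∑ j, ⟪w i, w j⟫_ℝ = 0 := fun i => by
      rw [← inner_sum, hwsum, inner_zero_right]
    have hid : ∑ i, ∑ j, ‖v t i - v t j‖ ^ 2 = 2 * (N:ℝ) * ∑ i, ‖w i‖ ^ 2 := by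
      have e1 : ∀ i j, v t i - v t j = w i - w j := fun i j => by
        simp only [hw]; abel
      calc ∑ i, ∑ j, ‖v t i - v t j‖ ^ 2
          = ∑ i, ∑ j, (‖w i‖ ^ 2 - 2 * ⟪w i, w j⟫_ℝ + ‖w j‖ ^ 2) := by
            refine Finset.sum_congr rfl fun i _ => Finset.sum_congr rfl fun j _ => ?_
            rw [e1 i j, norm_sub_sq_real]
        _ = ∑ i, ((N:ℝ) * ‖w i‖ ^ 2 + ∑ j, ‖w j‖ ^ 2) := by
            refine Finset.sum_congr rfl fun i _ => ?_
            rw [Finset.sum_add_distrib, Finset.sum_sub_distrib, Finset.sum_const,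
                Finset.card_univ, Fintype.card_fin, ← Finset.mul_sum, h0 i, nsmul_eq_mul]
            ring
        _ = 2 * (N:ℝ) * ∑ i, ‖w i‖ ^ 2 := by
            rw [Finset.sum_add_distrib, ← Finset.mul_sum, Finset.sum_const, Finset.card_univ,
                Fintype.card_fin, nsmul_eq_mul]
            ring
    have hVt : V t = (N:ℝ)⁻¹ * ∑ i, ‖w i‖ ^ 2 := by
      rw [hV t, hid, hc]
      field_simp
    have hu_norm : ∀ i, ‖u t i‖ = α * ‖w i‖ := by
      intro i
      have hwi : v t i - (N : ℝ)⁻¹ • ∑ k, v t k = w i := by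
        simp only [hw, hm]
      rw [hu t i, hwi, norm_smul, Real.norm_eq_abs, abs_neg, abs_of_pos hα]
    have hcs : (∑ i, ‖w i‖) ^ 2 ≤ (N:ℝ) * ∑ i, ‖w i‖ ^ 2 := by
      have h := Finset.sum_mul_sq_le_sq_mul_sq Finset.univ
        (fun _ : Fin N => (1:ℝ)) (fun i => ‖w i‖)
      simpa using h
    have hsum_w : ∑ i, ‖w i‖ ≤ (N:ℝ) * Real.sqrt (V 0) := by
      have hnn : 0 ≤ ∑ i, ‖w i‖ := Finset.sum_nonneg fun i _ => norm_nonneg _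
      have h1 : ∑ i, ‖w i‖ ≤ Real.sqrt ((N:ℝ) * ∑ i, ‖w i‖ ^ 2) := by
        rw [← Real.sqrt_sq hnn]
        exact Real.sqrt_le_sqrt hcs
      have h2 : (N:ℝ) * ∑ i, ‖w i‖ ^ 2 = (N:ℝ) ^ 2 * V t := by
        rw [hVt]
        field_simp
      have h3 : V t ≤ V 0 := by
        have h4 := hVexp t ht
        have he : Real.exp (-2 * α * t) ≤ 1 :=
          Real.exp_le_one_iff.mpr (by nlinarith [mul_nonneg hα.le ht])
        nlinarith [mul_le_mul_of_nonneg_left he (hVnn 0)]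
      have h5 : Real.sqrt ((N:ℝ) ^ 2 * V t) ≤ (N:ℝ) * Real.sqrt (V 0) := by
        rw [Real.sqrt_mul (by positivity), Real.sqrt_sq hNR.le]
        exact mul_le_mul_of_nonneg_left (Real.sqrt_le_sqrt h3) hNR.le
      calc ∑ i, ‖w i‖ ≤ Real.sqrt ((N:ℝ) * ∑ i, ‖w i‖ ^ 2) := h1
        _ = Real.sqrt ((N:ℝ) ^ 2 * V t) := by rw [h2]
        _ ≤ (N:ℝ) * Real.sqrt (V 0) := h5
    calc ∑ i, ‖u t i‖ = α * ∑ i, ‖w i‖ := by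
          rw [Finset.mul_sum]
          exact Finset.sum_congr rfl fun i _ => hu_norm i
      _ ≤ α * ((N:ℝ) * Real.sqrt (V 0)) := mul_le_mul_of_nonneg_left hsum_w hα.le
      _ = α * N * Real.sqrt (V 0) := by ring
      _ ≤ M := hM
  exact ⟨hVexp, hii, htend, hiv⟩
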